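/- There exists a Borel set X ⊆ ℝ with 0 ∈ X, 0 a Lebesgue point of χ_X, and a sequence of continuous functions f_n : ℝ → [0,∞) with ∫_ℝ f_n = 1 and lim_{n→∞} ∫_{[−δ,δ]} f_n = 1 for every δ > 0, but ∫_X f_n(x) dx = 0 for all n. (Thus the monotonicity assumptions in the preceding convergence theorem cannot be dropped.) -/

import Mathlib

open MeasureTheory Filter Topology

noncomputable section StmtFourAux

/-- tent function -/
private def tent : ℝ → ℝ := fun x => max (1 - |x|) 0

private lemma tent_cont : Continuous tent := by
  unfold tent; fun_prop

private lemma tent_nonneg (x : ℝ) : 0 ≤ tent x := le_max_right _ _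

private lemma tent_zero {x : ℝ} (hx : 1 ≤ |x|) : tent x = 0 := by
  unfold tent
  rw [max_eq_right]
  linarith

private lemma tent_integral : ∫ x : ℝ, tent x = 1 := by
  have hsupp : ∀ x ∉ Set.Icc (-1 : ℝ) 1, tent x = 0 := by
    intro x hx
    apply tent_zero
    rw [Set.mem_Icc] at hx
    rcases abs_cases x with ⟨h1, h2⟩ | ⟨h1, h2⟩ <;>
    · push_neg at hx
      by_contra hc
      push_neg at hc
      have := hx (by linarith)
      linarith
  have h1 : ∫ x : ℝ, tent x = ∫ x in Set.Icc (-1 : ℝ) 1, tent x :=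
    (setIntegral_eq_integral_of_forall_compl_eq_zero hsupp).symm
  have h2 : ∫ x in Set.Icc (-1 : ℝ) 1, tent x = ∫ x in (-1 : ℝ)..1, tent x := by
    rw [intervalIntegral.integral_of_le (by norm_num), integral_Icc_eq_integral_Ioc]
  have hInt : ∀ a b : ℝ, IntervalIntegrable tent volume a b := fun a b =>
    tent_cont.intervalIntegrable a b
  have h3 : ∫ x in (-1 : ℝ)..1, tent x =
      (∫ x in (-1 : ℝ)..0, tent x) + ∫ x in (0 : ℝ)..1, tent x :=
    (intervalIntegral.integral_add_adjacent_intervals (hInt _ _) (hInt _ _)).symm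
  have h4 : ∫ x in (0 : ℝ)..1, tent x = 1 / 2 := by
    have heq : Set.EqOn tent (fun x => 1 - x) (Set.uIcc (0 : ℝ) 1) := by
      intro x hx
      rw [Set.uIcc_of_le (by norm_num), Set.mem_Icc] at hx
      unfold tent
      rw [abs_of_nonneg hx.1, max_eq_left (by linarith)]
    rw [intervalIntegral.integral_congr heq,
      intervalIntegral.integral_sub intervalIntegrable_const
        intervalIntegral.intervalIntegrable_id]
    simp
    norm_num
  have h5 : ∫ x in (-1 : ℝ)..0, tent x = 1 / 2 := by
    have heq : Set.EqOn tent (fun x => 1 + x) (Set.uIcc (-1 : ℝ) 0) := by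
      intro x hx
      rw [Set.uIcc_of_le (by norm_num), Set.mem_Icc] at hx
      unfold tent
      rw [abs_of_nonpos hx.2, max_eq_left (by linarith)]
      ring_nf
    rw [intervalIntegral.integral_congr heq,
      intervalIntegral.integral_add intervalIntegrable_const
        intervalIntegral.intervalIntegrable_id]
    simp
    norm_num
  rw [h1, h2, h3, h4, h5]
  norm_num

/-- left endpoints of the removed intervals -/
private def aa (n : ℕ) : ℝ := 1 / 2 ^ (n + 1)

/-- lengths of the removed intervals -/
private def ll (n : ℕ) : ℝ := aa n ^ 3

private def hh (n : ℕ) : ℝ := ll n / 2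

private def cc (n : ℕ) : ℝ := aa n + hh n

private lemma aa_pos (n : ℕ) : 0 < aa n := by unfold aa; positivity

private lemma aa_le (n : ℕ) : aa n ≤ 1 / 2 := by
  unfold aa
  have h : (2 : ℝ) ≤ 2 ^ (n + 1) := by
    calc (2 : ℝ) = 2 ^ 1 := (pow_one 2).symm
    _ ≤ 2 ^ (n + 1) := by
      apply pow_le_pow_right₀ (by norm_num)
      omega
  exact one_div_le_one_div_of_le (by norm_num) h

private lemma ll_pos (n : ℕ) : 0 < ll n := by
  unfold ll; exact pow_pos (aa_pos n) 3

private lemma hh_pos (n : ℕ) : 0 < hh n := by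
  have := ll_pos n; unfold hh; linarith

private lemma ll_le_aa (n : ℕ) : ll n ≤ aa n := by
  have h1 := aa_pos n
  have h2 := aa_le n
  have h3 : aa n ^ 2 ≤ 1 := by nlinarith
  unfold ll
  calc aa n ^ 3 = aa n * aa n ^ 2 := by ring
  _ ≤ aa n * 1 := by nlinarith
  _ = aa n := mul_one _

private def SS : Set ℝ := ⋃ n, Set.Ioo (aa n) (aa n + ll n)

private lemma SS_open : IsOpen SS := isOpen_iUnion fun _ => isOpen_Ioo

/-- the bump functions -/
private def ff (n : ℕ) (x : ℝ) : ℝ := tent ((x - cc n) / hh n) / hh n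

private lemma ff_eq_zero (n : ℕ) {x : ℝ} (hx : x ∉ Set.Ioo (aa n) (aa n + ll n)) :
    ff n x = 0 := by
  have hhp := hh_pos n
  have habs : 1 ≤ |(x - cc n) / hh n| := by
    rw [abs_div, abs_of_pos hhp, le_div_iff₀ hhp, one_mul, le_abs]
    rw [Set.mem_Ioo] at hx
    push_neg at hx
    rcases le_or_gt x (aa n) with h | h
    · right
      unfold cc
      linarith
    · left
      have := hx h
      unfold cc hh at *
      linarith
  unfold ff
  rw [tent_zero habs, zero_div]

private lemma ff_integral (n : ℕ) : ∫ x : ℝ, ff n x = 1 := by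
  have hhp := hh_pos n
  unfold ff
  rw [integral_div]
  have h2 : ∫ x : ℝ, tent ((x - cc n) / hh n) =
      ∫ x : ℝ, (fun y => tent (y / hh n)) (x - cc n) := rfl
  rw [h2, integral_sub_right_eq_self (fun y => tent (y / hh n)) (cc n),
    MeasureTheory.Measure.integral_comp_div (fun y => tent y) (hh n),
    tent_integral, abs_of_pos hhp]
  simp
  exact hhp.ne'

private lemma volSS_bound {r : ℝ} (hr : 0 < r) :
    volume (SS ∩ Set.Icc (-r) r) ≤ ENNReal.ofReal (r ^ 2) := by
  have h1 : volume (SS ∩ Set.Icc (-r) r) ≤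
      ∑' n, volume (Set.Ioo (aa n) (aa n + ll n) ∩ Set.Icc (-r) r) := by
    unfold SS
    rw [Set.iUnion_inter]
    exact measure_iUnion_le _
  have h2 : ∀ n, volume (Set.Ioo (aa n) (aa n + ll n) ∩ Set.Icc (-r) r) ≤
      ENNReal.ofReal (aa n * r ^ 2) := by
    intro n
    rcases le_or_gt r (aa n) with hle | hlt
    · have hempty : Set.Ioo (aa n) (aa n + ll n) ∩ Set.Icc (-r) r = ∅ := by
        ext x
        simp only [Set.mem_inter_iff, Set.mem_Ioo, Set.mem_Icc, Set.mem_empty_iff_false,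
          iff_false, not_and, and_imp]
        intro h1 _ _
        intro h3
        linarith
      rw [hempty]
      simp
    · calc volume (Set.Ioo (aa n) (aa n + ll n) ∩ Set.Icc (-r) r) ≤
          volume (Set.Ioo (aa n) (aa n + ll n)) := measure_mono Set.inter_subset_left
      _ = ENNReal.ofReal (ll n) := by rw [Real.volume_Ioo]; ring_nf
      _ ≤ ENNReal.ofReal (aa n * r ^ 2) := by
          apply ENNReal.ofReal_le_ofReal
          have hp := aa_pos n
          have h4 : aa n ^ 2 ≤ r ^ 2 := by nlinarith
          unfold ll
          calc aa n ^ 3 = aa n * aa n ^ 2 := by ring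
          _ ≤ aa n * r ^ 2 := by nlinarith
  have h3 : ∑' n, ENNReal.ofReal (aa n * r ^ 2) = ENNReal.ofReal (r ^ 2) := by
    have heach : ∀ n : ℕ, ENNReal.ofReal (aa n * r ^ 2) =
        ENNReal.ofReal (r ^ 2) * ENNReal.ofReal (aa n) := by
      intro n
      rw [← ENNReal.ofReal_mul (by positivity)]
      ring_nf
    rw [tsum_congr heach, ENNReal.tsum_mul_left]
    have hsum : ∑' n : ℕ, ENNReal.ofReal (aa n) = 1 := by
      have hsummable : Summable (fun n : ℕ => (1 / 2 : ℝ) ^ (n + 1)) :=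
        (summable_geometric_of_lt_one (by norm_num) (by norm_num)).comp_injective
          (add_left_injective 1)
      have : ∀ n : ℕ, aa n = (1 / 2 : ℝ) ^ (n + 1) := by
        intro n; unfold aa; rw [div_pow, one_pow]
      rw [tsum_congr (fun n => by rw [this n]),
        ← ENNReal.ofReal_tsum_of_nonneg (fun n => by positivity) hsummable]
      have : ∑' n : ℕ, (1 / 2 : ℝ) ^ (n + 1) = 1 := by
        have hps : ∀ n : ℕ, (1 / 2 : ℝ) ^ (n + 1) = (1 / 2 : ℝ) ^ n * (1 / 2) :=
          fun n => pow_succ _ _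
        rw [tsum_congr hps,
          (summable_geometric_of_lt_one (by norm_num) (by norm_num)).tsum_mul_right,
          tsum_geometric_of_lt_one (by norm_num) (by norm_num)]
        norm_num
      rw [this, ENNReal.ofReal_one]
    rw [hsum, mul_one]
  calc volume (SS ∩ Set.Icc (-r) r) ≤
      ∑' n, volume (Set.Ioo (aa n) (aa n + ll n) ∩ Set.Icc (-r) r) := h1
  _ ≤ ∑' n, ENNReal.ofReal (aa n * r ^ 2) := ENNReal.tsum_le_tsum h2
  _ = ENNReal.ofReal (r ^ 2) := h3

end StmtFourAux

/-- Without the monotonicity assumptions the convergence theorem fails: there exist a Borel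
set `X ∋ 0` having `0` as a Lebesgue point of `χ_X`, and continuous nonnegative functions
`f n` of total integral `1` concentrating at `0`, with `∫_X f n = 0` for all `n`. -/
theorem stmt4 :
    ∃ (X : Set ℝ) (f : ℕ → ℝ → ℝ),
      MeasurableSet X ∧ (0 : ℝ) ∈ X ∧
      Tendsto (fun r : ℝ => (volume (X ∩ Set.Icc (-r) r)).toReal / (2 * r))
        (𝓝[>] (0 : ℝ)) (𝓝 1) ∧
      (∀ n, Continuous (f n)) ∧ (∀ n x, 0 ≤ f n x) ∧
      (∀ n, ∫ x : ℝ, f n x = 1) ∧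
      (∀ δ : ℝ, 0 < δ →
        Tendsto (fun n => ∫ x in Set.Icc (-δ) δ, f n x) atTop (𝓝 1)) ∧
      (∀ n, ∫ x in X, f n x = 0) := by
  refine ⟨SSᶜ, ff, SS_open.measurableSet.compl, ?_, ?_, ?_, ?_, ff_integral, ?_, ?_⟩
  · -- 0 ∈ SSᶜ
    intro h0
    rw [SS, Set.mem_iUnion] at h0
    obtain ⟨n, hn, -⟩ := h0
    exact absurd hn (not_lt.2 (aa_pos n).le)
  · -- density 1
    have key : ∀ r ∈ Set.Ioi (0 : ℝ),
        (volume (SSᶜ ∩ Set.Icc (-r) r)).toReal / (2 * r) =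
          1 - (volume (SS ∩ Set.Icc (-r) r)).toReal / (2 * r) := by
      intro r hr
      rw [Set.mem_Ioi] at hr
      have hIcc : volume (Set.Icc (-r) r) = ENNReal.ofReal (2 * r) := by
        rw [Real.volume_Icc]; ring_nf
      have hXI : SSᶜ ∩ Set.Icc (-r) r = Set.Icc (-r) r \ SS := by
        rw [Set.diff_eq, Set.inter_comm]
      have hfinIcc : volume (Set.Icc (-r) r) ≠ ⊤ := by
        rw [hIcc]; exact ENNReal.ofReal_ne_top
      have hfin1 : volume (Set.Icc (-r) r \ SS) ≠ ⊤ :=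
        ne_top_of_le_ne_top hfinIcc (measure_mono Set.diff_subset)
      have hfin2 : volume (Set.Icc (-r) r ∩ SS) ≠ ⊤ :=
        ne_top_of_le_ne_top hfinIcc (measure_mono Set.inter_subset_left)
      have hsplit := measure_diff_add_inter (Set.Icc (-r) r) SS_open.measurableSet
        (μ := volume)
      have hadd : (volume (Set.Icc (-r) r \ SS)).toReal +
          (volume (Set.Icc (-r) r ∩ SS)).toReal = 2 * r := by
        rw [← ENNReal.toReal_add hfin1 hfin2, hsplit, hIcc,
          ENNReal.toReal_ofReal (by linarith)]
      have hcomm : SS ∩ Set.Icc (-r) r = Set.Icc (-r) r ∩ SS := Set.inter_comm _ _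
      rw [hXI, hcomm]
      have h2r : (2 : ℝ) * r ≠ 0 := by
        have : (0 : ℝ) < 2 * r := by linarith
        exact ne_of_gt this
      field_simp
      linarith
    have h0 : Tendsto (fun r : ℝ => (volume (SS ∩ Set.Icc (-r) r)).toReal / (2 * r))
        (𝓝[>] (0 : ℝ)) (𝓝 0) := by
      have htendhalf : Tendsto (fun r : ℝ => r / 2) (𝓝[>] (0 : ℝ)) (𝓝 0) := by
        have h := ((continuous_id.div_const 2).tendsto (0 : ℝ)).mono_left
          (nhdsWithin_le_nhds (s := Set.Ioi (0 : ℝ)))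
        simpa using h
      apply tendsto_of_tendsto_of_tendsto_of_le_of_le' tendsto_const_nhds htendhalf
      · filter_upwards [self_mem_nhdsWithin] with r hr
        rw [Set.mem_Ioi] at hr
        positivity
      · filter_upwards [self_mem_nhdsWithin] with r hr
        rw [Set.mem_Ioi] at hr
        have hb : (volume (SS ∩ Set.Icc (-r) r)).toReal ≤ r ^ 2 :=
          ENNReal.toReal_le_of_le_ofReal (by positivity) (volSS_bound hr)
        calc (volume (SS ∩ Set.Icc (-r) r)).toReal / (2 * r) ≤ r ^ 2 / (2 * r) := by
              gcongr
        _ = r / 2 := by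
              rw [div_eq_div_iff (by positivity) (by norm_num)]
              ring
    have h1 : Tendsto (fun r : ℝ =>
        1 - (volume (SS ∩ Set.Icc (-r) r)).toReal / (2 * r)) (𝓝[>] (0 : ℝ)) (𝓝 1) := by
      have := tendsto_const_nhds (α := ℝ) (x := (1 : ℝ)) (f := 𝓝[>] (0 : ℝ)) |>.sub h0
      simpa using this
    apply h1.congr'
    filter_upwards [self_mem_nhdsWithin] with r hr
    exact (key r hr).symm
  · -- continuity
    intro n
    unfold ff
    exact (tent_cont.comp (by fun_prop)).div_const _
  · -- nonneg
    intro n x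
    exact div_nonneg (tent_nonneg _) (hh_pos n).le
  · -- concentration at 0
    intro δ hδ
    obtain ⟨N, hN⟩ := exists_pow_lt_of_lt_one hδ (show (1 / 2 : ℝ) < 1 by norm_num)
    have hev : ∀ n ≥ N, ∫ x in Set.Icc (-δ) δ, ff n x = 1 := by
      intro n hn
      have hsubset : Set.Ioo (aa n) (aa n + ll n) ⊆ Set.Icc (-δ) δ := by
        intro x hx
        rw [Set.mem_Ioo] at hx
        have h1 := aa_pos n
        have h2 := ll_le_aa n
        have h3 : 2 * aa n ≤ 2 * aa N := by
          have haux : aa n ≤ aa N := by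
            unfold aa
            have : (2 : ℝ) ^ (N + 1) ≤ 2 ^ (n + 1) := by
              apply pow_le_pow_right₀ (by norm_num)
              omega
            exact one_div_le_one_div_of_le (by positivity) this
          linarith
        have h4 : 2 * aa N ≤ δ := by
          have : aa N = (1 / 2 : ℝ) ^ (N + 1) := by
            unfold aa; rw [div_pow, one_pow]
          rw [this]
          have : (1 / 2 : ℝ) ^ (N + 1) ≤ (1 / 2 : ℝ) ^ N / 2 := by
            rw [pow_succ]
            nlinarith [pow_nonneg (show (0:ℝ) ≤ 1/2 by norm_num) N]
          nlinarith [hN, pow_nonneg (show (0:ℝ) ≤ 1/2 by norm_num) N]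
        constructor <;> nlinarith
      rw [setIntegral_eq_integral_of_forall_compl_eq_zero
        (fun x hx => ff_eq_zero n (fun hmem => hx (hsubset hmem)))]
      exact ff_integral n
    apply Tendsto.congr' _ (tendsto_const_nhds (x := (1 : ℝ)))
    filter_upwards [eventually_ge_atTop N] with n hn
    exact (hev n hn).symm
  · -- integral over X is 0
    intro n
    have hX : MeasurableSet (SSᶜ) := SS_open.measurableSet.compl
    have hz : ∀ x ∈ SSᶜ, ff n x = 0 := by
      intro x hx
      apply ff_eq_zero n
      intro hmem
      exact hx (Set.mem_iUnion.2 ⟨n, hmem⟩)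
    calc ∫ x in SSᶜ, ff n x = ∫ x in SSᶜ, (0 : ℝ) := setIntegral_congr_fun hX hz
    _ = 0 := by simp
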